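/- Let L be a projective lattice: a complete lattice which is atomistic (every element is the supremum of the atoms below it), in which every atom is compact (if an atom a satisfies a ≤ sSup D for a nonempty directed set D then a ≤ d for some d ∈ D), and which is modular. Let 𝒢(L) be the set of atoms of L with collinearity l(a,b,c) iff a ≤ b ⊔ c or b = c, and call S ⊆ 𝒢(L) a subspace if for all a,b ∈ S, every atom c with l(c,a,b) lies in S. Then the map β_L : x ↦ {a ∈ 𝒢(L) | a ≤ x} is an order isomorphism from L onto the set of subspaces of 𝒢(L) ordered by inclusion: β_L is injective, its image is exactly the set of subspaces of 𝒢(L), and x ≤ y if and only if β_L(x) ⊆ β_L(y). -/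

import Mathlib

/-- The type of atoms of a lattice. -/
def Atoms (L : Type*) [CompleteLattice L] : Type _ := {a : L // IsAtom a}

/-- A subspace of the projective geometry of atoms of a lattice `L`: a set `S` of atoms
such that for all `a, b ∈ S`, every atom `c` on the line through `a` and `b`
(i.e. with `c ≤ a ⊔ b`) lies in `S`. -/
def IsAtomSubspace {L : Type*} [CompleteLattice L] (S : Set (Atoms L)) : Prop :=
  ∀ a ∈ S, ∀ b ∈ S, ∀ c : Atoms L, c.1 ≤ a.1 ⊔ b.1 → c ∈ S

/-- Key projective exchange lemma in a modular lattice. -/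
lemma projKey {L : Type*} [CompleteLattice L]
    (hmod : ∀ x y z : L, x ≤ z → x ⊔ (y ⊓ z) = (x ⊔ y) ⊓ z)
    {a b : L} (ha : IsAtom a) (hb : IsAtom b) (x : L) (h : a ≤ b ⊔ x) :
    a ≤ x ∨ a = b ∨ ∃ c : L, IsAtom c ∧ c ≤ x ∧ a ≤ b ⊔ c := by
  by_cases hax : a ≤ x
  · exact Or.inl hax
  by_cases hbx : b ≤ x
  · exact Or.inl (le_trans h (sup_le hbx le_rfl))
  by_cases hab : a = b
  · exact Or.inr (Or.inl hab)
  right; right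
  set c : L := x ⊓ (a ⊔ b) with hc
  -- a ≤ b ⊔ c
  have habc : a ≤ b ⊔ c := by
    have := hmod b x (a ⊔ b) le_sup_right
    rw [hc, this]
    exact le_inf (le_trans h (sup_le le_sup_left le_sup_right)) le_sup_left
  -- b ⊓ c = ⊥
  have hbc : b ⊓ c = ⊥ := by
    rcases hb.le_iff.mp (inf_le_left : b ⊓ c ≤ b) with h1 | h1
    · exact h1
    · exact absurd (h1 ▸ (le_trans inf_le_right inf_le_left : b ⊓ c ≤ x)) hbx
  -- two-step interval: any z with b ≤ z ≤ a ⊔ b is b or a ⊔ b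
  have twostep : ∀ z : L, b ≤ z → z ≤ a ⊔ b → z = b ∨ z = a ⊔ b := by
    intro z hbz hzab
    have hz : b ⊔ (a ⊓ z) = z := by
      rw [hmod b a z hbz]
      exact inf_eq_right.mpr (by rwa [sup_comm])
    rcases ha.le_iff.mp (inf_le_left : a ⊓ z ≤ a) with h1 | h1
    · left; rw [← hz, h1, sup_bot_eq]
    · right
      have haz : a ≤ z := h1 ▸ inf_le_right
      exact le_antisymm hzab (sup_le haz hbz)
  have hcab : c ≤ a ⊔ b := inf_le_right
  -- b ⊔ c = a ⊔ b
  have hbceq : b ⊔ c = a ⊔ b := by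
    rcases twostep (b ⊔ c) le_sup_left (sup_le le_sup_right hcab) with h1 | h1
    · exact absurd ((hb.le_iff.mp (h1 ▸ habc)).resolve_left ha.1) hab
    · exact h1
  -- c ≠ ⊥
  have hcne : c ≠ ⊥ := by
    intro h0
    rw [h0, sup_bot_eq] at habc
    exact hab ((hb.le_iff.mp habc).resolve_left ha.1)
  -- c is an atom
  have hcatom : IsAtom c := by
    refine ⟨hcne, fun d hd => ?_⟩
    have hdc : d ≤ c := le_of_lt hd
    have hmd : d ⊔ (b ⊓ c) = (d ⊔ b) ⊓ c := hmod d b c hdc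
    rw [hbc, sup_bot_eq] at hmd
    rcases twostep (d ⊔ b) le_sup_right
        (sup_le (le_trans hdc hcab) le_sup_right) with h1 | h1
    · -- d ≤ b, so d ≤ b ⊓ c = ⊥
      have : d ≤ b ⊓ c := le_inf (h1 ▸ le_sup_left) hdc
      rw [hbc] at this
      exact le_bot_iff.mp this
    · -- d ⊔ b = a ⊔ b = b ⊔ c, so c ≤ d ⊔ b, so c = d, contradiction
      exfalso
      have h2 : c ≤ d ⊔ b := h1 ▸ (hbceq ▸ le_sup_right)
      have h3 : (d ⊔ b) ⊓ c = c := inf_eq_right.mpr h2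
      exact absurd (hmd.trans h3) (ne_of_lt hd)
  exact ⟨c, hcatom, inf_le_left, habc⟩

/-- An atom below a finite sup of atoms of a subspace lies in the subspace. -/
lemma projFinsetSup {L : Type*} [CompleteLattice L]
    (hmod : ∀ x y z : L, x ≤ z → x ⊔ (y ⊓ z) = (x ⊔ y) ⊓ z)
    (S : Set (Atoms L)) (hS : IsAtomSubspace S) :
    ∀ F : Finset (Atoms L), ↑F ⊆ S → ∀ a : Atoms L,
      a.1 ≤ F.sup (fun b => b.1) → a ∈ S := by
  classical
  intro F
  induction F using Finset.induction_on with
  | empty =>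
    intro _ a ha
    simp only [Finset.sup_empty, le_bot_iff] at ha
    exact absurd ha a.2.1
  | @insert b F hbF ih =>
    intro hsub a ha
    have hbS : b ∈ S := hsub (Finset.mem_insert_self b F)
    have hFS : ↑F ⊆ S := fun y hy => hsub (Finset.mem_insert_of_mem hy)
    rw [Finset.sup_insert] at ha
    rcases projKey hmod a.2 b.2 (F.sup (fun b => b.1)) ha with h | h | ⟨c, hc, hcx, hac⟩
    · exact ih hFS a h
    · have : a = b := Subtype.ext h
      exact this ▸ hbS
    · have hcS : (⟨c, hc⟩ : Atoms L) ∈ S := ih hFS ⟨c, hc⟩ hcx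
      exact hS b hbS ⟨c, hc⟩ hcS a hac

/-- For a projective lattice `L` (complete, atomistic, atoms compact, modular), the map
`β_L : x ↦ {a atom | a ≤ x}` is an order isomorphism from `L` onto the set of subspaces
of the projective geometry of atoms `𝒢(L)`, ordered by inclusion: it is injective, its
image is exactly the set of subspaces, and it preserves and reflects order. -/
theorem projLattice_iso_subspaces {L : Type*} [CompleteLattice L]
    (hatomistic : ∀ x : L, x = sSup {a : L | IsAtom a ∧ a ≤ x})
    (hcompact : ∀ a : L, IsAtom a → ∀ D : Set L, D.Nonempty → DirectedOn (· ≤ ·) D →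
      a ≤ sSup D → ∃ d ∈ D, a ≤ d)
    (hmod : ∀ x y z : L, x ≤ z → x ⊔ (y ⊓ z) = (x ⊔ y) ⊓ z) :
    Function.Injective (fun x : L => {a : Atoms L | a.1 ≤ x}) ∧
    (∀ x : L, IsAtomSubspace {a : Atoms L | a.1 ≤ x}) ∧
    (∀ S : Set (Atoms L), IsAtomSubspace S → ∃ x : L, S = {a : Atoms L | a.1 ≤ x}) ∧
    (∀ x y : L, x ≤ y ↔ {a : Atoms L | a.1 ≤ x} ⊆ {a : Atoms L | a.1 ≤ y}) := by
  classical
  have horder : ∀ x y : L, x ≤ y ↔ {a : Atoms L | a.1 ≤ x} ⊆ {a : Atoms L | a.1 ≤ y} := by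
    intro x y
    constructor
    · intro hxy a ha
      exact le_trans ha hxy
    · intro hsub
      calc x = sSup {a : L | IsAtom a ∧ a ≤ x} := hatomistic x
        _ ≤ y := sSup_le (fun a ⟨ha1, ha2⟩ => hsub (a := ⟨a, ha1⟩) ha2)
  refine ⟨?_, ?_, ?_, horder⟩
  · intro x y hxy
    simp only [Set.ext_iff, Set.mem_setOf_eq] at hxy
    exact le_antisymm ((horder x y).mpr fun a ha => (hxy a).mp ha)
      ((horder y x).mpr fun a ha => (hxy a).mpr ha)
  · intro x a ha b hb c hc
    exact le_trans hc (sup_le ha hb)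
  · intro S hS
    rcases Set.eq_empty_or_nonempty S with hSe | ⟨s0, hs0⟩
    · refine ⟨⊥, ?_⟩
      rw [hSe]
      ext a
      simp only [Set.mem_empty_iff_false, Set.mem_setOf_eq, le_bot_iff, false_iff]
      exact a.2.1
    · refine ⟨sSup (Subtype.val '' S), ?_⟩
      ext a
      simp only [Set.mem_setOf_eq]
      constructor
      · intro haS
        exact le_sSup ⟨a, haS, rfl⟩
      · intro hle
        set D : Set L :=
          {y | ∃ F : Finset (Atoms L), ↑F ⊆ S ∧ F.Nonempty ∧ y = F.sup (fun b => b.1)}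
          with hD
        have hDne : D.Nonempty :=
          ⟨s0.1, {s0}, by simpa using hs0, Finset.singleton_nonempty s0, by simp⟩
        have hDdir : DirectedOn (· ≤ ·) D := by
          rintro y ⟨F, hF, hFne, rfl⟩ z ⟨G, hG, hGne, rfl⟩
          refine ⟨(F ∪ G).sup (fun b => b.1),
            ⟨F ∪ G, ?_, Finset.Nonempty.mono Finset.subset_union_left hFne, rfl⟩, ?_, ?_⟩
          · intro y hy
            rcases Finset.mem_union.mp hy with h | h
            · exact hF h
            · exact hG h
          · exact Finset.sup_mono Finset.subset_union_left
          · exact Finset.sup_mono Finset.subset_union_right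
        have hle' : a.1 ≤ sSup D := by
          refine le_trans hle (sSup_le ?_)
          rintro _ ⟨b, hbS, rfl⟩
          exact le_trans (Finset.le_sup (f := fun c : Atoms L => c.1) (Finset.mem_singleton_self b) : b.1 ≤ ({b} : Finset (Atoms L)).sup (fun c => c.1))
            (le_sSup ⟨{b}, fun y hy => (Finset.mem_singleton.mp (Finset.mem_coe.mp hy)) ▸ hbS, Finset.singleton_nonempty b, rfl⟩)
        rcases hcompact a.1 a.2 D hDne hDdir hle' with ⟨d, ⟨F, hF, _, rfl⟩, had⟩
        exact projFinsetSup hmod S hS F hF a had
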